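/- For a symmetric positive definite matrix field D : Ω → ℝ^{m×m} that is differentiable, the pointwise inequality −∂_k D : ∂_k(D^{-1}) ≥ (1/m) |∂_k tr(log D)|² holds for each direction k, where ∂_k(D^{-1}) = −D^{-1} (∂_k D) D^{-1}. -/

import Mathlib

open Matrix

attribute [local instance] Matrix.frobeniusNormedAddCommGroup Matrix.frobeniusNormedSpace
attribute [local instance] Matrix.frobeniusNormedRing Matrix.frobeniusNormedAlgebra

section Aux
variable {m : ℕ}

private noncomputable def entryCLM (i j : Fin m) : Matrix (Fin m) (Fin m) ℝ →L[ℝ] ℝ :=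
  LinearMap.toContinuousLinearMap (Matrix.entryLinearMap ℝ ℝ i j)

private lemma hasDerivAt_entry {D : ℝ → Matrix (Fin m) (Fin m) ℝ} {M : Matrix (Fin m) (Fin m) ℝ}
    {t : ℝ} (h : HasDerivAt D M t) (i j : Fin m) :
    HasDerivAt (fun s => D s i j) (M i j) t :=
  (entryCLM i j).hasFDerivAt.comp_hasDerivAt t h

private lemma trace_adjugate_mul (A H : Matrix (Fin m) (Fin m) ℝ) :
    (A.adjugate * H).trace =
      ∑ σ : Equiv.Perm (Fin m), ((Equiv.Perm.sign σ : ℤ) : ℝ) *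
        ∑ i, (∏ j ∈ Finset.univ.erase i, A (σ j) j) * H (σ i) i := by
  have h1 : ∀ i, (A.adjugate * H) i i = (A.updateCol i fun j => H j i).det := by
    intro i
    rw [← Matrix.cramer_apply, Matrix.cramer_eq_adjugate_mulVec]
    simp [Matrix.mul_apply, Matrix.mulVec, dotProduct]
  calc (A.adjugate * H).trace = ∑ i, (A.updateCol i fun j => H j i).det := by
        simp [Matrix.trace, Matrix.diag, h1]
    _ = ∑ i, ∑ σ : Equiv.Perm (Fin m), ((Equiv.Perm.sign σ : ℤ) : ℝ) *
          (H (σ i) i * ∏ j ∈ Finset.univ.erase i, A (σ j) j) := by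
        refine Finset.sum_congr rfl fun i _ => ?_
        rw [Matrix.det_apply']
        refine Finset.sum_congr rfl fun σ _ => ?_
        congr 1
        rw [← Finset.mul_prod_erase Finset.univ _ (Finset.mem_univ i)]
        rw [Matrix.updateCol_self]
        congr 1
        refine Finset.prod_congr rfl fun j hj => ?_
        rw [Matrix.updateCol_apply, if_neg (Finset.ne_of_mem_erase hj)]
    _ = _ := by
        rw [Finset.sum_comm]
        simp only [Finset.mul_sum]
        exact Finset.sum_congr rfl fun σ _ => Finset.sum_congr rfl fun i _ => by ring

private lemma hasDerivAt_det {D : ℝ → Matrix (Fin m) (Fin m) ℝ} {M : Matrix (Fin m) (Fin m) ℝ}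
    {t : ℝ} (h : HasDerivAt D M t) :
    HasDerivAt (fun s => (D s).det) (((D t).adjugate * M).trace) t := by
  have h1 : HasDerivAt (fun s => ∑ σ : Equiv.Perm (Fin m),
      ((Equiv.Perm.sign σ : ℤ) : ℝ) * ∏ i, D s (σ i) i)
      (∑ σ : Equiv.Perm (Fin m), ((Equiv.Perm.sign σ : ℤ) : ℝ) *
        ∑ i, (∏ j ∈ Finset.univ.erase i, D t (σ j) j) • M (σ i) i) t := by
    apply HasDerivAt.fun_sum
    intro σ _
    exact (HasDerivAt.fun_finsetProd (fun i _ => hasDerivAt_entry h (σ i) i)).const_mul _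
  have h2 : (fun s => (D s).det) = fun s => ∑ σ : Equiv.Perm (Fin m),
      ((Equiv.Perm.sign σ : ℤ) : ℝ) * ∏ i, D s (σ i) i :=
    funext fun s => Matrix.det_apply' _
  rw [h2, trace_adjugate_mul]
  simpa [smul_eq_mul] using h1

end Aux

section Aux2
variable {m : ℕ}

private lemma hasDerivAt_inv_matrix {D : ℝ → Matrix (Fin m) (Fin m) ℝ}
    {M : Matrix (Fin m) (Fin m) ℝ} {t : ℝ} (h : HasDerivAt D M t) (hu : IsUnit (D t)) :
    HasDerivAt (fun s => (D s)⁻¹) (-((D t)⁻¹ * M * (D t)⁻¹)) t := by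
  have h1 := (hasFDerivAt_ringInverse (𝕜 := ℝ) hu.unit).comp_hasDerivAt t h
  have h2 : (fun s : ℝ => Ring.inverse (D s)) = fun s => (D s)⁻¹ :=
    funext fun s => (Matrix.nonsing_inv_eq_ringInverse _).symm
  have h3 : (↑hu.unit⁻¹ : Matrix (Fin m) (Fin m) ℝ) = (D t)⁻¹ := by
    rw [← Ring.inverse_unit hu.unit, IsUnit.unit_spec, Matrix.nonsing_inv_eq_ringInverse]
  rw [Function.comp_def, h2] at h1
  simp only [h3] at h1
  exact h1

private lemma hasDerivAt_log_det {D : ℝ → Matrix (Fin m) (Fin m) ℝ}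
    {M : Matrix (Fin m) (Fin m) ℝ} {t : ℝ} (h : HasDerivAt D M t) (hpd : (D t).PosDef) :
    HasDerivAt (fun s => Real.log (D s).det) (((D t)⁻¹ * M).trace) t := by
  have h1 := (hasDerivAt_det h).log hpd.det_pos.ne'
  have h2 : ((D t)⁻¹ * M).trace = ((D t).adjugate * M).trace / (D t).det := by
    rw [Matrix.inv_def, Ring.inverse_eq_inv', Matrix.smul_mul, Matrix.trace_smul,
      smul_eq_mul, div_eq_inv_mul]
  rwa [← h2] at h1

private lemma sq_trace_le (A : Matrix (Fin m) (Fin m) ℝ) (hA : Aᵀ = A) :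
    A.trace ^ 2 ≤ (m : ℝ) * (A * A).trace := by
  have h1 : A.trace ^ 2 ≤ (m : ℝ) * ∑ i, (A i i) ^ 2 := by
    have := sq_sum_le_card_mul_sum_sq (s := (Finset.univ : Finset (Fin m)))
      (f := fun i => A i i)
    simpa [Matrix.trace, Matrix.diag] using this
  refine h1.trans (mul_le_mul_of_nonneg_left ?_ (by positivity))
  have h2 : (A * A).trace = ∑ i, ∑ j, (A i j) ^ 2 := by
    simp only [Matrix.trace, Matrix.diag, Matrix.mul_apply]
    refine Finset.sum_congr rfl fun i _ => Finset.sum_congr rfl fun j _ => ?_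
    have : A j i = A i j := by conv_lhs => rw [← hA]; rw [Matrix.transpose_apply]
    rw [this]; ring
  rw [h2]
  refine Finset.sum_le_sum fun i _ => ?_
  exact Finset.single_le_sum (f := fun j => (A i j) ^ 2) (fun j _ => sq_nonneg _)
    (Finset.mem_univ i)

end Aux2

section Sq
open scoped MatrixOrder
variable {m : ℕ}
private noncomputable def psdSqrt (P : Matrix (Fin m) (Fin m) ℝ) : Matrix (Fin m) (Fin m) ℝ := CFC.sqrt P
private lemma psdSqrt_mul_self {P : Matrix (Fin m) (Fin m) ℝ} (h : P.PosSemidef) :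
    psdSqrt P * psdSqrt P = P := CFC.sqrt_mul_sqrt_self P h.nonneg
private lemma psdSqrt_isHermitian (P : Matrix (Fin m) (Fin m) ℝ) :
    (psdSqrt P).IsHermitian := (CFC.sqrt_nonneg P).posSemidef.1
end Sq

/-- For a differentiable symmetric positive definite matrix field D along one direction,
the pointwise inequality −∂D : ∂(D⁻¹) ≥ (1/m) |∂ tr(log D)|² holds, where
∂(D⁻¹) = −D⁻¹ (∂D) D⁻¹, A : B = tr(A Bᵀ) is the Frobenius product and
tr(log D) = log det D, so ∂ tr(log D) = tr(D⁻¹ ∂D). -/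
theorem matrix_log_gradient_inequality {m : ℕ} (hm : 0 < m)
    (D : ℝ → Matrix (Fin m) (Fin m) ℝ) (hD : Differentiable ℝ D)
    (hsym : ∀ t, (D t).IsSymm) (hpd : ∀ t, (D t).PosDef) :
    ∀ t : ℝ,
      deriv (fun s => ((D s)⁻¹ : Matrix (Fin m) (Fin m) ℝ)) t =
        -((D t)⁻¹ * deriv D t * (D t)⁻¹) ∧
      deriv (fun s => Real.log (D s).det) t = ((D t)⁻¹ * deriv D t).trace ∧
      (1 / (m : ℝ)) * (deriv (fun s => Real.log (D s).det) t) ^ 2 ≤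
        -(deriv D t * (deriv (fun s => ((D s)⁻¹ : Matrix (Fin m) (Fin m) ℝ)) t)ᵀ).trace := by
  intro t
  have hdt : HasDerivAt D (deriv D t) t := (hD t).hasDerivAt
  set M := deriv D t with hM
  set P := (D t)⁻¹ with hP
  have hinv : HasDerivAt (fun s => (D s)⁻¹) (-(P * M * P)) t :=
    hasDerivAt_inv_matrix hdt (hpd t).isUnit
  have hlog : HasDerivAt (fun s => Real.log (D s).det) ((P * M).trace) t :=
    hasDerivAt_log_det hdt (hpd t)
  refine ⟨hinv.deriv, hlog.deriv, ?_⟩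
  rw [show deriv (fun s => ((D s)⁻¹ : Matrix (Fin m) (Fin m) ℝ)) t = -(P * M * P) from hinv.deriv,
    hlog.deriv]
  -- symmetry of M
  have hMsym : Mᵀ = M := by
    have hT := (LinearMap.toContinuousLinearMap
        (Matrix.transposeLinearEquiv (Fin m) (Fin m) ℝ ℝ).toLinearMap).hasFDerivAt.comp_hasDerivAt
        t hdt
    have heq : (fun s => LinearMap.toContinuousLinearMap
        (Matrix.transposeLinearEquiv (Fin m) (Fin m) ℝ ℝ).toLinearMap (D s)) = D :=
      funext fun s => (hsym s).eq
    rw [Function.comp_def, heq] at hT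
    exact hT.unique hdt
  have hPsym : Pᵀ = P := by
    rw [← Matrix.conjTranspose_eq_transpose_of_trivial]
    exact (hpd t).inv.isHermitian
  -- rewrite the RHS
  have hRHS : -(M * (-(P * M * P))ᵀ).trace = (M * P * M * P).trace := by
    rw [Matrix.transpose_neg, Matrix.transpose_mul, Matrix.transpose_mul, hPsym, hMsym,
      Matrix.mul_neg, Matrix.trace_neg, neg_neg]
    rw [← mul_assoc, ← mul_assoc]
  rw [hRHS]
  -- Cauchy-Schwarz via the square root of P
  have hPpd : P.PosDef := (hpd t).inv
  set R := psdSqrt P with hRdef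
  have hR2 : R * R = P := psdSqrt_mul_self hPpd.posSemidef
  have hRsym : Rᵀ = R := by
    rw [← Matrix.conjTranspose_eq_transpose_of_trivial]
    exact psdSqrt_isHermitian P
  set A := R * M * R with hAdef
  have hAsym : Aᵀ = A := by
    rw [hAdef, Matrix.transpose_mul, Matrix.transpose_mul, hRsym, hMsym, ← mul_assoc]
  have h1 : A.trace ^ 2 ≤ (m : ℝ) * (A * A).trace := sq_trace_le A hAsym
  have hTrA : A.trace = (P * M).trace := by
    rw [hAdef, Matrix.trace_mul_comm (R * M) R, ← mul_assoc, hR2]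
  have hTrAA : (A * A).trace = (M * P * M * P).trace := by
    have e : A * A = R * (M * (R * R) * M) * R := by
      rw [hAdef]; simp only [mul_assoc]
    rw [e, Matrix.trace_mul_cycle, hR2]
    exact Matrix.trace_mul_comm P (M * P * M)
  rw [← hTrA, ← hTrAA, one_div, inv_mul_le_iff₀ (by exact_mod_cast hm)]
  exact h1
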